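/- For every collective of type (1,0) (a single compassless automaton) on the square lattice of width 2 and every initial configuration, the movement of the collective is not directed: there exists an implementation of its behaviour that is not directed. -/

import Mathlib

/-- Vertices of the square lattice of width 2: `E = ℤ × {0,1}`. -/
abbrev V : Type := ℤ × Fin 2

/-- Two vertices are neighbours iff they agree in one coordinate and differ by
exactly 1 in the other.  (In the second coordinate, which lives in `{0,1}`,
"differ by exactly 1" is the same as being distinct.) -/
def nbr (u v : V) : Prop :=
  (u.2 = v.2 ∧ |u.1 - v.1| = 1) ∨ (u.1 = v.1 ∧ u.2 ≠ v.2)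

/-- The multiset of the three neighbours of a vertex. -/
def nbrs (v : V) : Multiset V :=
  {(v.1 - 1, v.2), (v.1 + 1, v.2), (v.1, v.2 + 1)}

/-- The set of members of the collective located at vertex `v`,
given the positions `p` of the `n` members. -/
def occ {n : ℕ} (p : Fin n → V) (v : V) : Finset (Fin n) :=
  Finset.univ.filter fun i => p i = v

/-- The compassless observation made from vertex `v`: the set of members at `v`,
together with the unordered multiset of the sets of members at the three
neighbouring vertices.  No directional information is carried. -/
def obs {n : ℕ} (p : Fin n → V) (v : V) :
    Finset (Fin n) × Multiset (Finset (Fin n)) :=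
  (occ p v, (nbrs v).map (occ p))

/-- A collective of type `(1, m)`: one finite automaton (member `0`) and `m`
pebbles (members `1, …, m`).  The automaton has a finite state set `Q`,
an initial state `q₀`, a transition function `φ` and an output function `ψ`
(`none` = stay, `some y` = move to a neighbouring vertex whose set of members is
exactly `y`; in particular `some ∅` = move to a free neighbouring vertex).
Each pebble has a single internal state, so it is described by its output
function `ρ` alone: on a given observation it either stays (`false`) or,
provided it is on the same vertex as the automaton and the automaton makes a
move, follows the automaton to its new vertex (`true`). -/
structure Collective (m : ℕ) where
  Q : Type
  finQ : Fintype Q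
  q₀ : Q
  φ : Q → Finset (Fin (m + 1)) × Multiset (Finset (Fin (m + 1))) → Q
  ψ : Q → Finset (Fin (m + 1)) × Multiset (Finset (Fin (m + 1))) →
        Option (Finset (Fin (m + 1)))
  ρ : Fin (m + 1) → Finset (Fin (m + 1)) × Multiset (Finset (Fin (m + 1))) → Bool

/-- One (nondeterministic) simultaneous step of the collective `A`, from
configuration `c` to configuration `c'`.  A configuration is an internal state
of the automaton together with the positions of all members. -/
def Step {m : ℕ} (A : Collective m)
    (c c' : A.Q × (Fin (m + 1) → V)) : Prop :=
  let p := c.2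
  let x := obs p (p 0)
  -- state update
  c'.1 = A.φ c.1 x ∧
  -- move of the automaton (member 0)
  ((A.ψ c.1 x = none ∧ c'.2 0 = p 0) ∨
    (∃ y, A.ψ c.1 x = some y ∧
      ((c'.2 0 ∈ nbrs (p 0) ∧ occ p (c'.2 0) = y) ∨
        (c'.2 0 = p 0 ∧ ∀ v ∈ nbrs (p 0), occ p v ≠ y)))) ∧
  -- moves of the pebbles: a pebble moves to the automaton's new vertex iff its
  -- output says so, it is on the automaton's (old) vertex, and the automaton
  (∀ i : Fin (m + 1), i ≠ 0 →
    ((A.ρ i (obs p (p i)) = true ∧ p i = p 0 ∧ c'.2 0 ≠ p 0) →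
        c'.2 i = c'.2 0) ∧
    (¬(A.ρ i (obs p (p i)) = true ∧ p i = p 0 ∧ c'.2 0 ≠ p 0) →
        c'.2 i = p i))

/-- An implementation of the behaviour of the collective `A` from the initial
positions `p₀` (and the initial internal state `A.q₀`): an infinite sequence of
configurations, each obtained from the previous one by one simultaneous step,
with all nondeterministic choices resolved arbitrarily. -/
def Implementation {m : ℕ} (A : Collective m) (p₀ : Fin (m + 1) → V)
    (c : ℕ → A.Q × (Fin (m + 1) → V)) : Prop :=
  c 0 = (A.q₀, p₀) ∧ ∀ t : ℕ, Step A (c t) (c (t + 1))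

/-- The coordinate of the collective: the average of the positions of its
members, as a point of `ℚ²`. -/
def coord {m : ℕ} (p : Fin (m + 1) → V) : ℚ × ℚ :=
  ((∑ i, ((p i).1 : ℚ)) / (m + 1), (∑ i, (((p i).2 : ℕ) : ℚ)) / (m + 1))

/-- The diameter of the collective: the maximum absolute difference of any
coordinate between positions of any two members. -/
def diam {m : ℕ} (p : Fin (m + 1) → V) : ℕ :=
  Finset.univ.sup fun ik : Fin (m + 1) × Fin (m + 1) =>
    max ((p ik.1).1 - (p ik.2).1).natAbs
      ((((p ik.1).2 : ℕ) : ℤ) - (((p ik.2).2 : ℕ) : ℤ)).natAbs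

/-- An implementation is directed if there are constants `c₁, c₂ ∈ ℕ` such that
the diameter is at most `c₁` at every time `t`, and for every `t` there exist
`1 ≤ t', t'' ≤ c₂` with `v(t+t') − v(t) = v(t+t'+t'') − v(t+t') ≠ (0,0)`. -/
def DirectedImpl {m : ℕ} (A : Collective m)
    (c : ℕ → A.Q × (Fin (m + 1) → V)) : Prop :=
  ∃ c₁ c₂ : ℕ, (∀ t : ℕ, diam (c t).2 ≤ c₁) ∧
    ∀ t : ℕ, ∃ t' t'' : ℕ, 1 ≤ t' ∧ t' ≤ c₂ ∧ 1 ≤ t'' ∧ t'' ≤ c₂ ∧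
      coord (c (t + t')).2 - coord (c t).2 =
        coord (c (t + t' + t'')).2 - coord (c (t + t')).2 ∧
      coord (c (t + t')).2 - coord (c t).2 ≠ (0, 0)

namespace ND10

/-- The constant observation seen by a lone automaton. -/
def x₀ : Finset (Fin 1) × Multiset (Finset (Fin 1)) :=
  (Finset.univ, {∅, ∅, ∅})

lemma occ_self (p : Fin 1 → V) : occ p (p 0) = Finset.univ := by
  ext i
  simp [occ, Subsingleton.elim i 0]

lemma occ_ne (p : Fin 1 → V) {v : V} (h : v ≠ p 0) : occ p v = ∅ := by
  ext i
  simp only [occ, Finset.mem_filter, Finset.mem_univ, true_and, Finset.notMem_empty,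
    iff_false, Subsingleton.elim i 0]
  exact fun h' => h h'.symm

lemma fin2_succ_ne : ∀ a : Fin 2, a + 1 ≠ a := by decide

lemma mem_nbrs_ne {v w : V} (h : w ∈ nbrs v) : w ≠ v := by
  simp only [nbrs, Multiset.insert_eq_cons, Multiset.mem_cons, Multiset.mem_singleton] at h
  rcases h with h | h | h <;> subst h <;> intro hc
  · exact absurd (congrArg Prod.fst hc) (by simp)
  · exact absurd (congrArg Prod.fst hc) (by simp)
  · exact fin2_succ_ne v.2 (congrArg Prod.snd hc)

lemma obs_eq (p : Fin 1 → V) : obs p (p 0) = x₀ := by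
  unfold obs x₀
  refine Prod.ext (occ_self p) ?_
  have : ∀ w ∈ nbrs (p 0), occ p w = ∅ := fun w hw => occ_ne p (mem_nbrs_ne hw)
  simp only [nbrs, Multiset.insert_eq_cons, Multiset.map_cons, Multiset.map_singleton]
  rw [this _ (by simp [nbrs]), this _ (by simp [nbrs]), this _ (by simp [nbrs])]

/-- The vertical neighbour. -/
def flip (v : V) : V := (v.1, v.2 + 1)

lemma flip_mem_nbrs (v : V) : flip v ∈ nbrs v := by simp [flip, nbrs]

lemma flip_ne (v : V) : flip v ≠ v := mem_nbrs_ne (flip_mem_nbrs v)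

/-- The adversarial implementation: whenever the automaton is told to move,
move vertically. -/
def seq (A : Collective 0) (p₀ : Fin 1 → V) : ℕ → A.Q × (Fin 1 → V)
  | 0 => (A.q₀, p₀)
  | t + 1 =>
      let c := seq A p₀ t
      (A.φ c.1 x₀,
        if A.ψ c.1 x₀ = some ∅ then (fun _ => flip (c.2 0)) else c.2)

lemma seq_step (A : Collective 0) (p₀ : Fin 1 → V) (t : ℕ) :
    Step A (seq A p₀ t) (seq A p₀ (t + 1)) := by
  set c := seq A p₀ t with hc
  set p := c.2 with hp
  have hobs : obs p (p 0) = x₀ := obs_eq p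
  refine ⟨?_, ?_, ?_⟩
  · show (seq A p₀ (t+1)).1 = _
    rw [hobs]; rfl
  · rw [hobs]
    by_cases h : A.ψ c.1 x₀ = some ∅
    · right
      refine ⟨∅, h, Or.inl ⟨?_, ?_⟩⟩
      · show (if A.ψ c.1 x₀ = some ∅ then (fun _ : Fin 1 => flip (c.2 0)) else c.2) 0 ∈ _
        rw [if_pos h]
        exact flip_mem_nbrs (p 0)
      · show occ p ((if A.ψ c.1 x₀ = some ∅ then (fun _ : Fin 1 => flip (c.2 0)) else c.2) 0) = ∅
        rw [if_pos h]
        exact occ_ne p (flip_ne (p 0))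
    · rcases he : A.ψ c.1 x₀ with _ | y
      · left
        refine ⟨rfl, ?_⟩
        show (if A.ψ c.1 x₀ = some ∅ then (fun _ : Fin 1 => flip (c.2 0)) else c.2) 0 = p 0
        rw [if_neg h]
      · right
        have hy : y ≠ ∅ := by rintro rfl; exact h he
        refine ⟨y, rfl, Or.inr ⟨?_, ?_⟩⟩
        · show (if A.ψ c.1 x₀ = some ∅ then (fun _ : Fin 1 => flip (c.2 0)) else c.2) 0 = p 0
          rw [if_neg (by rw [he]; exact fun h' => hy (Option.some.inj h'))]
        · intro v hv
          rw [occ_ne p (mem_nbrs_ne hv)]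
          exact fun h' => hy h'.symm
  · intro i hi
    exact absurd (Fin.ext (Nat.lt_one_iff.mp i.isLt)) hi

lemma seq_fst_const (A : Collective 0) (p₀ : Fin 1 → V) (t : ℕ) :
    ((seq A p₀ t).2 0).1 = (p₀ 0).1 := by
  induction t with
  | zero => rfl
  | succ t ih =>
      show ((if A.ψ (seq A p₀ t).1 x₀ = some ∅ then
          (fun _ : Fin 1 => flip ((seq A p₀ t).2 0)) else (seq A p₀ t).2) 0).1 = _
      split <;> simpa [flip] using ih

lemma coord_one (p : Fin 1 → V) :
    coord p = (((p 0).1 : ℚ), (((p 0).2 : ℕ) : ℚ)) := by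
  simp [coord, Fin.sum_univ_one]

end ND10

/-- For every collective of type (1,0) on the square lattice of
width 2 and every initial configuration, the movement of the collective is not
directed: there exists an implementation of its behaviour that is not directed. -/
theorem not_directed_1_0 (A : Collective 0) (p₀ : Fin 1 → V) :
    ∃ c : ℕ → A.Q × (Fin 1 → V),
      Implementation A p₀ c ∧ ¬ DirectedImpl A c := by
  classical
  refine ⟨ND10.seq A p₀, ⟨rfl, ND10.seq_step A p₀⟩, ?_⟩
  rintro ⟨c₁, c₂, -, hdir⟩
  obtain ⟨t', t'', -, -, -, -, heq, hne⟩ := hdir 0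
  -- the y-coordinate of the automaton at each time, as a rational in {0,1}
  set g : ℕ → ℚ := fun t => ((((ND10.seq A p₀ t).2 0).2 : ℕ) : ℚ) with hg
  have hg01 : ∀ t, g t = 0 ∨ g t = 1 := by
    intro t
    have h2 : (((ND10.seq A p₀ t).2 0).2 : ℕ) < 2 := Fin.is_lt _
    interval_cases h : (((ND10.seq A p₀ t).2 0).2 : ℕ) <;> simp [hg, h]
  have hco : ∀ t, coord (ND10.seq A p₀ t).2 = (((p₀ 0).1 : ℚ), g t) := by
    intro t
    rw [ND10.coord_one]
    exact Prod.ext (by rw [ND10.seq_fst_const]) rfl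
  simp only [zero_add, hco] at heq hne
  have h1 : g t' - g 0 = g (t' + t'') - g t' := by
    simpa [Prod.ext_iff] using heq
  have h2 : ¬ (g t' - g 0 = 0) := by
    simpa [Prod.ext_iff] using hne
  rcases hg01 0 with ha | ha <;> rcases hg01 t' with hb | hb <;>
    rcases hg01 (t' + t'') with hc | hc <;>
    rw [ha, hb] at h1 h2 <;> rw [hc] at h1 <;> (norm_num at h1 <;> norm_num at h2)
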